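/- Let K ⊆ ℂ be a compact set such that U := ℂ ∖ K is nonempty and connected, let c be a real number and L a complex number with Re L = c. Suppose f : ℂ → ℂ is complex differentiable on U, continuous on the closure of U, satisfies Re f(z) = c for every z in the frontier of U, and f(z) tends to L along the cocompact filter (i.e. as |z| → ∞). Then f(z) = L for every z ∈ U. -/

import Mathlib

open Filter Metric Set

/-- Helper: one-sided maximum principle on the unbounded exterior domain, via
`exp (f - c)` and the bounded max principle on `Kᶜ ∩ ball 0 R`. -/
lemma stmt_16_aux (K : Set ℂ) (hK : IsCompact K) (c : ℝ) (f : ℂ → ℂ)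
    (hf : DifferentiableOn ℂ f Kᶜ)
    (hcont : ContinuousOn f (closure (Kᶜ : Set ℂ)))
    (hbd : ∀ z ∈ frontier (Kᶜ : Set ℂ), (f z).re = c)
    (hlim : Filter.Tendsto (fun z => (f z).re) (Filter.cocompact ℂ) (nhds c)) :
    ∀ z ∈ (Kᶜ : Set ℂ), (f z).re ≤ c := by
  intro z hz
  refine le_of_forall_pos_le_add (fun ε hε => ?_)
  have hev : ∀ᶠ w in Filter.cocompact ℂ, (f w).re < c + ε :=
    hlim.eventually_lt_const (by linarith)
  rcases Filter.mem_cocompact.mp hev with ⟨t, ht, hts⟩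
  obtain ⟨R, hR⟩ := (hK.union ht).isBounded.subset_closedBall 0
  set R' : ℝ := max R ‖z‖ + 1 with hR'def
  have hR'pos : 0 < R' := by positivity
  have hRR' : R < R' := by
    have := le_max_left R ‖z‖; rw [hR'def]; linarith
  have hzR' : ‖z‖ < R' := by
    have := le_max_right R ‖z‖; rw [hR'def]; linarith
  set V : Set ℂ := Kᶜ ∩ Metric.ball 0 R' with hVdef
  set g : ℂ → ℂ := fun w => Complex.exp (f w - c) with hgdef
  have hgnorm : ∀ w, ‖g w‖ = Real.exp ((f w).re - c) := by
    intro w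
    simp [hgdef, Complex.norm_exp, Complex.sub_re]
  have hdc : DiffContOnCl ℂ g V := by
    constructor
    · exact (((hf.mono Set.inter_subset_left).sub_const (c : ℂ))).cexp
    · have hclV : closure V ⊆ closure (Kᶜ : Set ℂ) := closure_mono Set.inter_subset_left
      exact Complex.continuous_exp.comp_continuousOn
        ((hcont.mono hclV).sub continuousOn_const)
  have hfr : ∀ w ∈ frontier V, ‖g w‖ ≤ Real.exp ε := by
    intro w hw
    rcases frontier_inter_subset _ _ hw with h | h
    · rw [hgnorm, hbd w h.1]
      simpa using Real.exp_le_exp.mpr (le_of_lt hε)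
    · have hwn : ‖w‖ = R' := by
        have := h.2
        rw [frontier_ball 0 (ne_of_gt hR'pos)] at this
        simpa using this
      have hwt : w ∉ t := by
        intro hwt
        have : ‖w‖ ≤ R := by simpa using hR (Set.mem_union_right _ hwt)
        rw [hwn] at this; linarith
      have hlt : (f w).re < c + ε := hts hwt
      rw [hgnorm]
      exact Real.exp_le_exp.mpr (by linarith)
  have hzV : z ∈ V := ⟨hz, by simpa using hzR'⟩
  have hbdd : Bornology.IsBounded V :=
    (Metric.isBounded_ball).subset Set.inter_subset_right
  have := Complex.norm_le_of_forall_mem_frontier_norm_le hbdd hdc hfr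
    (subset_closure hzV)
  rw [hgnorm] at this
  have := Real.exp_le_exp.mp this
  linarith

/-- Maximum-principle argument of Section 2: a function holomorphic on the exterior `U = Kᶜ`
of a compact set, continuous up to the boundary, with `Re f = c` on the frontier of `U` and
`f → L` (with `Re L = c`) at infinity, is identically equal to `L` on `U`. -/
theorem stmt_16 (K : Set ℂ) (hK : IsCompact K)
    (hne : (Kᶜ : Set ℂ).Nonempty) (hconn : IsConnected (Kᶜ : Set ℂ))
    (c : ℝ) (L : ℂ) (hL : L.re = c) (f : ℂ → ℂ)
    (hf : DifferentiableOn ℂ f Kᶜ)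
    (hcont : ContinuousOn f (closure (Kᶜ : Set ℂ)))
    (hbd : ∀ z ∈ frontier (Kᶜ : Set ℂ), (f z).re = c)
    (hlim : Filter.Tendsto f (Filter.cocompact ℂ) (nhds L)) :
    ∀ z ∈ (Kᶜ : Set ℂ), f z = L := by
  have hlim_re : Filter.Tendsto (fun z => (f z).re) (Filter.cocompact ℂ) (nhds c) := by
    have := (Complex.continuous_re.tendsto L).comp hlim
    rwa [hL] at this
  -- Re f = c on Kᶜ
  have hle : ∀ z ∈ (Kᶜ : Set ℂ), (f z).re ≤ c :=
    stmt_16_aux K hK c f hf hcont hbd hlim_re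
  have hge : ∀ z ∈ (Kᶜ : Set ℂ), c ≤ (f z).re := by
    have h2 := stmt_16_aux K hK (-c) (fun w => -f w)
      (hf.neg)
      (hcont.neg)
      (by intro w hw; simp [hbd w hw])
      (by simpa using hlim_re.neg)
    intro z hz
    have := h2 z hz
    simp at this
    linarith
  have hre : ∀ z ∈ (Kᶜ : Set ℂ), (f z).re = c :=
    fun z hz => le_antisymm (hle z hz) (hge z hz)
  have hUopen : IsOpen (Kᶜ : Set ℂ) := hK.isClosed.isOpen_compl
  have hA : AnalyticOnNhd ℂ f Kᶜ := hf.analyticOnNhd hUopen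
  rcases hA.is_constant_or_isOpen hconn.isPreconnected with ⟨w, hw⟩ | hopen
  · -- constant case: the constant must be `L`
    have hmem : (Kᶜ : Set ℂ) ∈ Filter.cocompact ℂ :=
      Filter.mem_cocompact.mpr ⟨K, hK, subset_rfl⟩
    have hev : f =ᶠ[Filter.cocompact ℂ] fun _ => w :=
      Filter.eventually_of_mem hmem hw
    have hconst : Filter.Tendsto (fun _ : ℂ => w) (Filter.cocompact ℂ) (nhds L) :=
      hlim.congr' hev
    have hwL : w = L := tendsto_nhds_unique tendsto_const_nhds hconst
    intro z hz; rw [hw z hz, hwL]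
  · -- open case: image lies in a line, contradiction
    exfalso
    obtain ⟨z₀, hz₀⟩ := hne
    have himg : IsOpen (f '' Kᶜ) := hopen Kᶜ subset_rfl hUopen
    rcases Metric.isOpen_iff.mp himg (f z₀) ⟨z₀, hz₀, rfl⟩ with ⟨δ, hδ, hball⟩
    have hp : (f z₀ + (δ / 2 : ℝ)) ∈ f '' Kᶜ := by
      apply hball
      simp [Metric.mem_ball, dist_eq_norm]
      rw [abs_of_nonneg (by linarith)]
      linarith
    rcases hp with ⟨y, hy, hfy⟩
    have h1 : (f y).re = c := hre y hy
    have h2 : (f z₀).re = c := hre z₀ hz₀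
    have : (f y).re = c + δ / 2 := by
      rw [hfy]; simp [Complex.add_re, h2]
    linarith
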